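/- Let integers m, ℓ satisfy m ≥ 5 and 1 ≤ ℓ ≤ m, and let α ∈ (0, π/2) satisfy sin²α = (ℓ(ℓ+m−2) + 2m−8)/(2ℓ(ℓ+m−2)). Then the map q = (sin α · u, cos α) satisfies ∫_{B^m} |∇q|² dx = ½ (ℓ(ℓ+m−2) + 2m−8) · vol(S^{m−1})/(m−2) and ∫_{B^m} |Δq|² dx = ½ ℓ(ℓ+m−2)(ℓ(ℓ+m−2) + 2m−8) · vol(S^{m−1})/(m−4); in particular both integrals are finite, so q has square-integrable first and second derivatives on B^m (q ∈ W^{2,2}). -/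

import Mathlib

open MeasureTheory Metric Real RealInnerProductSpace

noncomputable section

abbrev E (m : ℕ) : Type := EuclideanSpace ℝ (Fin m)

/-- The `i`-th partial derivative of a map between Euclidean spaces. -/
def pd {m N : ℕ} (f : E m → E N) (i : Fin m) (x : E m) : E N :=
  fderiv ℝ f x (EuclideanSpace.single i 1)

/-- The componentwise Euclidean Laplacian `Δf = Σ_i ∂_i² f`. -/
def lap {m N : ℕ} (f : E m → E N) (x : E m) : E N :=
  ∑ i : Fin m, pd (fun y => pd f i y) i x

/-- `|∇f|² = Σ_i |∂_i f|²`. -/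
def gradSq {m N : ℕ} (f : E m → E N) (x : E m) : ℝ :=
  ∑ i : Fin m, ‖pd f i x‖ ^ 2

/-- `⟨∇f, ∇g⟩ = Σ_i ⟨∂_i f, ∂_i g⟩`. -/
def gradInner {m N : ℕ} (f g : E m → E N) (x : E m) : ℝ :=
  ∑ i : Fin m, ⟪pd f i x, pd g i x⟫

/-- The deformed generalized equator map `q = (sin α · u, cos α)`. -/
def qmap {m N : ℕ} (α : ℝ) (u : E m → E N) (x : E m) : E (N + 1) :=
  WithLp.toLp 2 (fun i : Fin (N + 1) => if h : (i : ℕ) < N then Real.sin α * u x ⟨i, h⟩ else Real.cos α)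

/-- The Hessian quadratic form of the bienergy at `q`, evaluated on `η`. -/
def Qform {m N : ℕ} (q η : E m → E N) : ℝ :=
  ∫ x in ball (0 : E m) 1,
    (‖lap η x‖ ^ 2 + 2 * (gradSq q x) ^ 2 * ‖η x‖ ^ 2
      - ⟪lap (lap q) x, q x⟫ * ‖η x‖ ^ 2
      - 2 * gradSq q x * gradSq η x - 4 * (gradInner q η x) ^ 2)

/-- Admissible test fields: smooth, compactly supported in the unit ball,
pointwise orthogonal to `q` on `B^m ∖ {0}`. -/
def Admissible {m N : ℕ} (q η : E m → E N) : Prop :=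
  ContDiff ℝ (⊤ : ℕ∞) η ∧ tsupport η ⊆ ball (0 : E m) 1 ∧
    ∀ x ∈ ball (0 : E m) 1 \ {(0 : E m)}, ⟪η x, q x⟫ = 0

/-! ### Auxiliary material -/

lemma radial_helper (m s : ℕ) (hs : 0 < s) (hsm : s < m) :
    IntegrableOn (fun x : E m => (‖x‖ ^ s)⁻¹) (ball (0 : E m) 1) volume ∧
    (∫ x in ball (0 : E m) 1, (‖x‖ ^ s)⁻¹) =
      (m : ℝ) * (volume (ball (0 : E m) 1)).toReal / ((m : ℝ) - (s : ℝ)) := by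
  haveI : Nonempty (Fin m) := ⟨⟨0, by omega⟩⟩
  haveI : Nontrivial (E m) := inferInstance
  have hdim : Module.finrank ℝ (E m) = m := finrank_euclideanSpace_fin
  set f : ℝ → ℝ := fun y => if y < 1 then (y ^ s)⁻¹ else 0 with hf
  have hind : (fun x : E m => f ‖x‖) = (ball (0:E m) 1).indicator (fun x => (‖x‖^s)⁻¹) := by
    funext x
    by_cases h : ‖x‖ < 1 <;> simp [hf, Set.indicator, mem_ball_zero_iff, h]
  have hg_eq : Set.EqOn (fun y : ℝ => y ^ (m-1) • f y)
      ((Set.Ioo (0:ℝ) 1).indicator fun y => y ^ (m-1-s)) (Set.Ioi 0) := by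
    intro y hy
    have hy0 : (0:ℝ) < y := hy
    by_cases h1 : y < 1
    · have : y ^ (m-1-s) = y ^ (m-1) * (y ^ s)⁻¹ := pow_sub₀ y hy0.ne' (by omega)
      simp [hf, h1, Set.indicator, Set.mem_Ioo, hy0, smul_eq_mul, this]
    · simp [hf, h1, Set.indicator, Set.mem_Ioo, hy0]
  have h1int : IntegrableOn (fun y : ℝ => y ^ (m-1-s)) (Set.Ioo (0:ℝ) 1) volume :=
    ((intervalIntegral.intervalIntegrable_pow (m-1-s) (μ := volume) (a := 0) (b := 1)).1).mono_set
      Set.Ioo_subset_Ioc_self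
  have hIoi_int : IntegrableOn (fun y : ℝ => y ^ (m-1) • f y) (Set.Ioi (0:ℝ)) volume := by
    have h2 : IntegrableOn ((Set.Ioo (0:ℝ) 1).indicator fun y => y ^ (m-1-s)) (Set.Ioi 0) volume :=
      (h1int.integrable_indicator measurableSet_Ioo).integrableOn
    exact h2.congr_fun (fun y hy => (hg_eq hy).symm) measurableSet_Ioi
  have hIoi_val : (∫ y in Set.Ioi (0:ℝ), y ^ (m-1) • f y) = 1 / ((m:ℝ) - s) := by
    rw [setIntegral_congr_fun measurableSet_Ioi hg_eq,
      setIntegral_indicator measurableSet_Ioo,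
      Set.inter_eq_self_of_subset_right Set.Ioo_subset_Ioi_self,
      ← integral_Ioc_eq_integral_Ioo,
      ← intervalIntegral.integral_of_le (by norm_num : (0:ℝ) ≤ 1),
      integral_pow]
    have hc : ((m - 1 - s : ℕ) : ℝ) = (m : ℝ) - (s:ℝ) - 1 := by
      have h1 : m - 1 - s = m - (s + 1) := by omega
      rw [h1, Nat.cast_sub (by omega)]
      push_cast; ring
    rw [hc]
    have hms : (m:ℝ) - (s:ℝ) ≠ 0 := by
      have : (s:ℝ) < (m:ℝ) := by exact_mod_cast hsm
      linarith
    rw [one_pow, zero_pow (by omega : m - 1 - s + 1 ≠ 0)]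
    norm_num
  have hIoiSub : Integrable (fun y : Set.Ioi (0:ℝ) => f y.1)
      (Measure.volumeIoiPow (m - 1)) := by
    have hme : MeasurableEmbedding (Subtype.val : Set.Ioi (0:ℝ) → ℝ) :=
      MeasurableEmbedding.subtype_coe measurableSet_Ioi
    have hcomap : Integrable ((fun y : ℝ => y ^ (m-1) • f y) ∘ Subtype.val)
        ((volume : Measure ℝ).comap (Subtype.val : Set.Ioi (0:ℝ) → ℝ)) := by
      rw [← hme.integrable_map_iff, hme.map_comap, Subtype.range_coe]
      exact hIoi_int
    rw [Measure.volumeIoiPow]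
    refine (integrable_withDensity_iff_integrable_smul'
      (g := fun y : Set.Ioi (0:ℝ) => f y.1)
      ((measurable_subtype_coe.pow_const _).ennreal_ofReal)
      (ae_of_all _ (fun y => ENNReal.ofReal_lt_top)) ).mpr ?_
    refine hcomap.congr (ae_of_all _ (fun y => ?_))
    show y.1 ^ (m-1) • f y.1 = (ENNReal.ofReal (y.1 ^ (m - 1))).toReal • f y.1
    rw [ENNReal.toReal_ofReal (pow_nonneg (le_of_lt y.2) _)]
  have hprod : Integrable (fun p : sphere (0:E m) 1 × Set.Ioi (0:ℝ) => f p.2.1)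
      ((volume : Measure (E m)).toSphere.prod (Measure.volumeIoiPow (m - 1))) := by
    have h1 : Integrable (fun _ : sphere (0:E m) 1 => (1:ℝ))
        ((volume : Measure (E m)).toSphere) := integrable_const _
    simpa using h1.mul_prod hIoiSub
  have hcomp : Integrable (fun x : ({(0:E m)}ᶜ : Set (E m)) => f ‖(x:E m)‖)
      ((volume : Measure (E m)).comap Subtype.val) := by
    have hmp := (volume : Measure (E m)).measurePreserving_homeomorphUnitSphereProd
    rw [hdim] at hmp
    have h := (hmp.integrable_comp_emb (Homeomorph.measurableEmbedding _)).mpr hprod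
    exact h.congr (ae_of_all _ fun x => by simp [homeomorphUnitSphereProd_apply_snd_coe])
  have hball : Integrable (fun x : E m => f ‖x‖) (volume : Measure (E m)) := by
    have hme : MeasurableEmbedding (Subtype.val : ({(0:E m)}ᶜ : Set (E m)) → E m) :=
      MeasurableEmbedding.subtype_coe (measurableSet_singleton _).compl
    have h2 : Integrable (fun x : E m => f ‖x‖)
        (Measure.map Subtype.val ((volume : Measure (E m)).comap Subtype.val)) :=
      hme.integrable_map_iff.mpr hcomp
    rwa [hme.map_comap, Subtype.range_coe, restrict_compl_singleton] at h2
  constructor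
  · rw [hind, integrable_indicator_iff measurableSet_ball] at hball
    exact hball
  · have hmain := integral_fun_norm_addHaar (volume : Measure (E m)) f
    rw [hdim] at hmain
    rw [hind, integral_indicator measurableSet_ball] at hmain
    rw [hmain, hIoi_val, nsmul_eq_mul, smul_eq_mul]
    rw [mul_one_div, mul_div_assoc]
    rfl

def incl (N : ℕ) : E N →ₗᵢ[ℝ] E (N + 1) where
  toLinearMap :=
    { toFun := fun v => (WithLp.toLp 2 (fun i : Fin (N + 1) => if h : (i : ℕ) < N then v ⟨i, h⟩ else 0) : E (N + 1))
      map_add' := by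
        intro v w; ext i
        by_cases h : (i : ℕ) < N <;> simp [h, PiLp.add_apply]
      map_smul' := by
        intro c v; ext i
        by_cases h : (i : ℕ) < N <;> simp [h, PiLp.smul_apply] }
  norm_map' := by
    intro v
    rw [EuclideanSpace.norm_eq, EuclideanSpace.norm_eq]
    congr 1
    rw [Fin.sum_univ_castSucc]
    simp

lemma incl_norm {N : ℕ} (v : E N) : ‖(incl N).toContinuousLinearMap v‖ = ‖v‖ :=
  (incl N).norm_map v

def cvec (N : ℕ) (α : ℝ) : E (N + 1) :=
  WithLp.toLp 2 (fun i : Fin (N + 1) => if (i : ℕ) < N then 0 else Real.cos α)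

lemma qmap_eq {m N : ℕ} (α : ℝ) (u : E m → E N) :
    qmap α u = fun x => Real.sin α • (incl N).toContinuousLinearMap (u x) + cvec N α := by
  funext x; ext i
  by_cases h : (i : ℕ) < N <;>
    simp [qmap, h, incl, cvec, PiLp.add_apply, PiLp.smul_apply]

section derivs
variable {m N : ℕ} {α : ℝ} {u : E m → E N}

lemma pd_qmap (hu_smooth : ContDiffOn ℝ (⊤ : ℕ∞) u {(0 : E m)}ᶜ)
    {x : E m} (hx : x ≠ 0) (i : Fin m) :
    pd (qmap α u) i x = Real.sin α • (incl N).toContinuousLinearMap (pd u i x) := by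
  set T := (incl N).toContinuousLinearMap with hT
  have hud : DifferentiableAt ℝ u x :=
    (hu_smooth.contDiffAt (isOpen_compl_singleton.mem_nhds hx)).differentiableAt (by simp)
  have h3 : HasFDerivAt (qmap α u)
      (Real.sin α • (T.comp (fderiv ℝ u x))) x := by
    rw [qmap_eq]
    exact ((T.hasFDerivAt.comp x hud.hasFDerivAt).const_smul (Real.sin α)).add_const _
  rw [pd, h3.fderiv]
  simp [pd]

lemma pd_u_diff (hu_smooth : ContDiffOn ℝ (⊤ : ℕ∞) u {(0 : E m)}ᶜ) (i : Fin m) :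
    DifferentiableOn ℝ (fun y => pd u i y) {(0 : E m)}ᶜ := by
  have h := (hu_smooth.fderiv_of_isOpen (m := (⊤ : ℕ∞)) isOpen_compl_singleton
      (by exact_mod_cast le_top)).differentiableOn (by simp)
  exact (ContinuousLinearMap.apply ℝ (E N)
    (EuclideanSpace.single i 1)).differentiable.comp_differentiableOn h

lemma pd2_qmap (hu_smooth : ContDiffOn ℝ (⊤ : ℕ∞) u {(0 : E m)}ᶜ)
    {x : E m} (hx : x ≠ 0) (i : Fin m) :
    pd (fun y => pd (qmap α u) i y) i x
      = Real.sin α • (incl N).toContinuousLinearMap (pd (fun y => pd u i y) i x) := by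
  set T := (incl N).toContinuousLinearMap with hT
  have hmem : {(0 : E m)}ᶜ ∈ nhds x := isOpen_compl_singleton.mem_nhds hx
  have hev : (fun y => pd (qmap α u) i y) =ᶠ[nhds x] fun y => Real.sin α • T (pd u i y) :=
    Filter.eventuallyEq_of_mem hmem fun y hy => pd_qmap hu_smooth hy i
  have hdAt : DifferentiableAt ℝ (fun y => pd u i y) x :=
    (pd_u_diff hu_smooth i).differentiableAt hmem
  have h2 : HasFDerivAt (fun y => Real.sin α • T (pd u i y))
      (Real.sin α • (T.comp (fderiv ℝ (fun y => pd u i y) x))) x :=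
    (T.hasFDerivAt.comp x hdAt.hasFDerivAt).const_smul (Real.sin α)
  rw [pd, hev.fderiv_eq, h2.fderiv]
  simp [pd]

end derivs

/-- Energy integrals of q = (sin α · u, cos α) over the unit ball; here
the surface measure of the unit sphere is vol(S^{m−1}) = m · vol(B^m). In particular
both integrals are finite, i.e. q ∈ W^{2,2}. -/
theorem q_energy_integrals
    (m ℓ N : ℕ) (hm : 5 ≤ m) (hℓ1 : 1 ≤ ℓ) (hℓm : ℓ ≤ m)
    (u : E m → E N)
    (hu_smooth : ContDiffOn ℝ (⊤ : ℕ∞) u {(0 : E m)}ᶜ)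
    (hu_unit : ∀ x : E m, x ≠ 0 → ‖u x‖ = 1)
    (hu_hom : ∀ c : ℝ, 0 < c → ∀ x : E m, u (c • x) = u x)
    (hu_lap : ∀ x : E m, x ≠ 0 →
      lap u x = (-((ℓ : ℝ) * ((ℓ : ℝ) + (m : ℝ) - 2)) / ‖x‖ ^ 2) • u x)
    (hu_grad : ∀ x : E m, x ≠ 0 →
      gradSq u x = (ℓ : ℝ) * ((ℓ : ℝ) + (m : ℝ) - 2) / ‖x‖ ^ 2)
    (α : ℝ) (hα : α ∈ Set.Ioo 0 (π / 2))
    (hsin : Real.sin α ^ 2 =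
      ((ℓ : ℝ) * ((ℓ : ℝ) + (m : ℝ) - 2) + 2 * (m : ℝ) - 8) /
        (2 * (ℓ : ℝ) * ((ℓ : ℝ) + (m : ℝ) - 2))) :
    IntegrableOn (fun x => gradSq (qmap α u) x) (ball (0 : E m) 1) volume ∧
    IntegrableOn (fun x => ‖lap (qmap α u) x‖ ^ 2) (ball (0 : E m) 1) volume ∧
    (∫ x in ball (0 : E m) 1, gradSq (qmap α u) x) =
      (1 / 2) * ((ℓ : ℝ) * ((ℓ : ℝ) + (m : ℝ) - 2) + 2 * (m : ℝ) - 8) *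
        ((m : ℝ) * (volume (ball (0 : E m) 1)).toReal) / ((m : ℝ) - 2) ∧
    (∫ x in ball (0 : E m) 1, ‖lap (qmap α u) x‖ ^ 2) =
      (1 / 2) * ((ℓ : ℝ) * ((ℓ : ℝ) + (m : ℝ) - 2)) *
        ((ℓ : ℝ) * ((ℓ : ℝ) + (m : ℝ) - 2) + 2 * (m : ℝ) - 8) *
        ((m : ℝ) * (volume (ball (0 : E m) 1)).toReal) / ((m : ℝ) - 4) := by
  haveI : Nonempty (Fin m) := ⟨⟨0, by omega⟩⟩
  haveI : Nontrivial (E m) := inferInstance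
  have hℓR : (1:ℝ) ≤ (ℓ:ℝ) := by exact_mod_cast hℓ1
  have hmR : (5:ℝ) ≤ (m:ℝ) := by exact_mod_cast hm
  set lam : ℝ := (ℓ:ℝ) * ((ℓ:ℝ) + (m:ℝ) - 2) with hlam
  have hlampos : 0 < lam := mul_pos (by linarith) (by linarith)
  have hsinpos : 0 < Real.sin α :=
    Real.sin_pos_of_pos_of_lt_pi hα.1 (by have := Real.pi_pos; have := hα.2; linarith)
  have hgrad : ∀ x : E m, x ≠ 0 →
      gradSq (qmap α u) x = (Real.sin α ^ 2 * lam) * (‖x‖ ^ 2)⁻¹ := by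
    intro x hx
    have hterm : ∀ i : Fin m, ‖pd (qmap α u) i x‖ ^ 2 = Real.sin α ^ 2 * ‖pd u i x‖ ^ 2 := by
      intro i
      rw [pd_qmap hu_smooth hx i, norm_smul, incl_norm, mul_pow, Real.norm_eq_abs, sq_abs]
    unfold gradSq
    rw [Finset.sum_congr rfl (fun i _ => hterm i), ← Finset.mul_sum]
    rw [show (∑ i : Fin m, ‖pd u i x‖ ^ 2) = gradSq u x from rfl, hu_grad x hx]
    rw [div_eq_mul_inv]; ring
  have hlapq : ∀ x : E m, x ≠ 0 →
      ‖lap (qmap α u) x‖ ^ 2 = (Real.sin α ^ 2 * lam ^ 2) * (‖x‖ ^ 4)⁻¹ := by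
    intro x hx
    have hl : lap (qmap α u) x = Real.sin α • (incl N).toContinuousLinearMap (lap u x) := by
      unfold lap
      rw [Finset.sum_congr rfl (fun i _ => pd2_qmap hu_smooth hx i),
        ← Finset.smul_sum, ← map_sum]
    have hx0 : ‖x‖ ≠ 0 := norm_ne_zero_iff.mpr hx
    rw [hl, norm_smul, incl_norm, hu_lap x hx, norm_smul, hu_unit x hx]
    rw [Real.norm_eq_abs, Real.norm_eq_abs, abs_of_nonneg hsinpos.le, abs_div, abs_neg,
      abs_of_nonneg hlampos.le, abs_of_nonneg (sq_nonneg ‖x‖)]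
    field_simp
  have h0ae : ∀ᵐ x ∂(volume.restrict (ball (0:E m) 1)), x ≠ (0:E m) := by
    refine ae_restrict_of_ae ?_
    rw [ae_iff]
    have h : {x : E m | ¬ x ≠ 0} = {0} := by ext x; simp
    rw [h]; exact measure_singleton 0
  obtain ⟨hint2, hval2⟩ := radial_helper m 2 (by omega) (by omega)
  obtain ⟨hint4, hval4⟩ := radial_helper m 4 (by omega) (by omega)
  have hm2 : (m:ℝ) - 2 ≠ 0 := by linarith
  have hm4 : (m:ℝ) - 4 ≠ 0 := by linarith
  refine ⟨?_, ?_, ?_, ?_⟩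
  · exact (hint2.const_mul (Real.sin α ^ 2 * lam)).congr
      (h0ae.mono fun x hx => (hgrad x hx).symm)
  · exact (hint4.const_mul (Real.sin α ^ 2 * lam ^ 2)).congr
      (h0ae.mono fun x hx => (hlapq x hx).symm)
  · rw [integral_congr_ae (h0ae.mono fun x hx => hgrad x hx), integral_const_mul, hval2, hsin]
    have hℓ0 : (ℓ:ℝ) ≠ 0 := by linarith
    have hsum0 : (ℓ:ℝ) + (m:ℝ) - 2 ≠ 0 := by linarith
    rw [hlam]
    push_cast
    field_simp
  · rw [integral_congr_ae (h0ae.mono fun x hx => hlapq x hx), integral_const_mul, hval4, hsin]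
    have hℓ0 : (ℓ:ℝ) ≠ 0 := by linarith
    have hsum0 : (ℓ:ℝ) + (m:ℝ) - 2 ≠ 0 := by linarith
    rw [hlam]
    push_cast
    field_simp

end
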